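/- Let V be a finite-dimensional 𝔽₂-vector space with a nondegenerate alternating bilinear pairing ⟨-,-⟩ and let σ : V → V be an invertible linear map preserving the pairing. Then every affine transformation f(x) = σ(x) + c that preserves a quadratic refinement q of the pairing (q(x+y) = q(x)+q(y)+⟨x,y⟩, q∘f = q) has a fixed point. -/

import Mathlib

/-- Let V be a finite-dimensional 𝔽₂-vector space with a nondegenerate
alternating bilinear pairing B, and σ an invertible linear map preserving B.  Then every
affine transformation f(x) = σ(x) + c preserving a quadratic refinement q of B
(q(x+y) = q(x)+q(y)+B(x,y) and q ∘ f = q) has a fixed point. -/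
theorem affine_symplectic_transformation_fixed_point
    (V : Type*) [AddCommGroup V] [Module (ZMod 2) V] [FiniteDimensional (ZMod 2) V]
    (B : V →ₗ[ZMod 2] V →ₗ[ZMod 2] ZMod 2)
    (halt : ∀ x : V, B x x = 0)
    (hnondeg : ∀ x : V, (∀ y : V, B x y = 0) → x = 0)
    (σ : V →ₗ[ZMod 2] V) (hσ : Function.Bijective σ)
    (hσB : ∀ x y : V, B (σ x) (σ y) = B x y)
    (c : V) (q : V → ZMod 2)
    (hq : ∀ x y : V, q (x + y) = q x + q y + B x y)
    (hfq : ∀ x : V, q (σ x + c) = q x) :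
    ∃ x : V, σ x + c = x := by
  classical
  have h2 : ∀ a : ZMod 2, a + a = 0 := by decide
  have hvv : ∀ x : V, x + x = 0 := by
    intro x
    have h11 : (1 + 1 : ZMod 2) = 0 := by decide
    calc x + x = (1 + 1 : ZMod 2) • x := by rw [add_smul, one_smul]
    _ = (0 : ZMod 2) • x := by rw [h11]
    _ = 0 := zero_smul _ _
  have hAlt : (B : LinearMap.BilinForm (ZMod 2) V).IsAlt := halt
  have hRefl : (B : LinearMap.BilinForm (ZMod 2) V).IsRefl := hAlt.isRefl
  have hNon : LinearMap.BilinForm.Nondegenerate B :=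
    (LinearMap.IsRefl.nondegenerate_iff_separatingLeft hRefl).mpr hnondeg
  set T : V →ₗ[ZMod 2] V := σ + LinearMap.id with hT
  -- fixed vectors of σ are exactly ker T
  have hker : ∀ x : V, x ∈ LinearMap.ker T → σ x = x := by
    intro x h
    have h' : σ x + x = 0 := h
    have := congrArg (· + x) h'
    simpa [add_assoc, hvv x] using this
  -- q 0 = 0 and q c = 0
  have hq0 : q 0 = 0 := by
    have h1 : q (0 + c) = q 0 + q c + B 0 c := hq 0 c
    rw [zero_add, map_zero, LinearMap.zero_apply, add_zero] at h1
    have h0 : q c = q 0 := by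
      have := hfq 0
      rwa [map_zero, zero_add] at this
    rw [h0] at h1
    have := congrArg (· + q 0) h1
    simpa [add_assoc, h2 (q 0), add_comm] using this.symm
  have hqc : q c = 0 := by
    have := hfq 0
    rw [map_zero, zero_add] at this
    rw [this, hq0]
  -- c is orthogonal to ker T
  have hcorth : ∀ k ∈ LinearMap.ker T, B k c = 0 := by
    intro k hk
    have hσk := hker k hk
    have h1 : q (k + c) = q k + q c + B k c := hq k c
    have h2' : q (k + c) = q k := by
      have := hfq k
      rwa [hσk] at this
    rw [h2', hqc, add_zero] at h1
    have h3 : q k + (B k) c = q k + 0 := by rw [add_zero]; exact h1.symm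
    exact add_left_cancel h3
  -- range T is contained in the orthogonal complement of ker T
  have hrange_le : LinearMap.range T ≤
      LinearMap.BilinForm.orthogonal B (LinearMap.ker T) := by
    rintro _ ⟨y, rfl⟩
    rw [LinearMap.BilinForm.mem_orthogonal_iff]
    intro k hk
    have hσk := hker k hk
    show B k (T y) = 0
    have : B k (T y) = B k (σ y) + B k y := by
      simp [hT, map_add]
    rw [this]
    have hkk : B k (σ y) = B k y := by
      conv_lhs => rw [← hσk]
      exact hσB k y
    rw [hkk]
    exact h2 _
  -- dimension count: range T = orthogonal complement of ker T
  have hdim : Module.finrank (ZMod 2) (LinearMap.range T) =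
      Module.finrank (ZMod 2)
        (LinearMap.BilinForm.orthogonal B (LinearMap.ker T)) := by
    rw [LinearMap.BilinForm.finrank_orthogonal hNon]
    have h1 := LinearMap.finrank_range_add_finrank_ker T
    have h2 : Module.finrank (ZMod 2) (LinearMap.ker T) ≤ Module.finrank (ZMod 2) V :=
      Submodule.finrank_le _
    omega
  have heq : LinearMap.range T =
      LinearMap.BilinForm.orthogonal B (LinearMap.ker T) :=
    Submodule.eq_of_le_of_finrank_le hrange_le (le_of_eq hdim.symm)
  -- c lies in the orthogonal complement, hence in the range of T
  have hc : c ∈ LinearMap.range T := by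
    rw [heq, LinearMap.BilinForm.mem_orthogonal_iff]
    intro k hk
    exact hcorth k hk
  obtain ⟨x, hx⟩ := hc
  refine ⟨x, ?_⟩
  have hx' : σ x + x = c := hx
  rw [← hx', ← add_assoc, hvv (σ x), zero_add]
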